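/- For all positive integers m, n, the determinant of the Kasteleyn matrix K of the m×n grid graph equals the product ∏_{j=1}^{m} ∏_{k=1}^{n} (2cos(πj/(m+1)) + 2i·cos(πk/(n+1))). -/

import Mathlib

/-- The m×n grid graph on vertex set Fin m × Fin n: (x,y) ~ (x',y') iff |x-x'|+|y-y'| = 1. -/
def gridGraph (m n : ℕ) : SimpleGraph (Fin m × Fin n) :=
  SimpleGraph.fromRel (fun u v =>
    (u.1 = v.1 ∧ u.2.val + 1 = v.2.val) ∨ (u.2 = v.2 ∧ u.1.val + 1 = v.1.val))

/-- The Kasteleyn matrix of the m×n grid graph: horizontal edges weighted 1,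
vertical edges weighted i, all other entries 0. -/
def kasteleyn (m n : ℕ) : Matrix (Fin m × Fin n) (Fin m × Fin n) ℂ :=
  Matrix.of fun u v =>
    if u.2 = v.2 ∧ (u.1.val + 1 = v.1.val ∨ v.1.val + 1 = u.1.val) then 1
    else if u.1 = v.1 ∧ (u.2.val + 1 = v.2.val ∨ v.2.val + 1 = u.2.val) then Complex.I
    else 0


section KastAux
open Real Finset Matrix Kronecker

open Real Finset

lemma cos_sum (m l : ℕ) (hl : 0 < l) (hl2 : l < 2*(m+1)) :
    ∑ x ∈ range m, Real.cos (π * l * (x+1) / (m+1)) = if Even l then -1 else 0 := by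
  have hm1 : (0:ℝ) < (m:ℝ)+1 := by positivity
  set θ : ℝ := π * l / (m+1) with hθ
  have hθ' : ∀ x : ℕ, π * l * ((x:ℝ)+1) / (m+1) = θ * (x+1) := by
    intro x; rw [hθ]; field_simp
  have hθpos : 0 < θ := by rw [hθ]; positivity
  have hθlt : θ/2 < π := by
    rw [hθ, div_div, div_lt_iff₀ (by positivity)]
    have : (l:ℝ) < 2*((m:ℝ)+1) := by exact_mod_cast hl2
    nlinarith [Real.pi_pos]
  have hs : Real.sin (θ/2) ≠ 0 :=
    ne_of_gt (Real.sin_pos_of_pos_of_lt_pi (by positivity) hθlt)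
  set f : ℕ → ℝ := fun x => Real.sin (θ*x + θ/2) with hf
  have key : ∀ x:ℕ, 2 * Real.sin (θ/2) * Real.cos (θ*((x:ℝ)+1)) = f (x+1) - f x := by
    intro x
    show _ = Real.sin (θ*((x:ℕ)+1:ℕ) + θ/2) - Real.sin (θ*x + θ/2)
    push_cast
    rw [show θ*((x:ℝ)) + θ/2 = (θ*((x:ℝ)+1)) - θ/2 by ring,
      Real.sin_add, Real.sin_sub]
    ring
  have tele : ∑ x ∈ range m, (f (x+1) - f x) = f m - f 0 := Finset.sum_range_sub f m
  have main : 2 * Real.sin (θ/2) * ∑ x ∈ range m, Real.cos (π * l * (x+1) / (m+1))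
      = f m - f 0 := by
    rw [Finset.mul_sum, ← tele]
    exact Finset.sum_congr rfl fun x _ => by rw [hθ' x]; exact key x
  have hfm : f m = -((-1)^l * Real.sin (θ/2)) := by
    show Real.sin (θ*(m:ℝ) + θ/2) = _
    have h3 : θ*(m:ℝ) + θ/2 = (l:ℝ)*π - θ/2 := by rw [hθ]; field_simp; ring
    rw [h3, Real.sin_nat_mul_pi_sub]
  have hf0 : f 0 = Real.sin (θ/2) := by
    show Real.sin (θ*((0:ℕ):ℝ) + θ/2) = _
    norm_num
  have final : (2 * Real.sin (θ/2)) * ∑ x ∈ range m, Real.cos (π * l * (x+1) / (m+1))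
      = (2 * Real.sin (θ/2)) * ((-((-1:ℝ)^l) - 1)/2) := by
    rw [main, hfm, hf0]; ring
  have h2 := mul_left_cancel₀ (mul_ne_zero two_ne_zero hs) final
  rw [h2]
  rcases Nat.even_or_odd l with he | ho
  · rw [if_pos he, he.neg_one_pow]; norm_num
  · rw [if_neg (Nat.not_even_iff_odd.mpr ho), ho.neg_one_pow]; norm_num

lemma prod_to_sum (A B : ℝ) : Real.sin A * Real.sin B = (Real.cos (A-B) - Real.cos (A+B))/2 := by
  rw [Real.cos_sub, Real.cos_add]; ring

lemma sin_orth_aux (m u v : ℕ) (hu2 : u ≤ m) (hv2 : v ≤ m) (hlt : v < u) :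
    ∑ x ∈ range m, Real.sin (π*u*(x+1)/(m+1)) * Real.sin (π*v*(x+1)/(m+1)) = 0 := by
  have h1 : ∀ x : ℕ, Real.sin (π*u*((x:ℝ)+1)/(m+1)) * Real.sin (π*v*((x:ℝ)+1)/(m+1))
      = (Real.cos (π*((u-v:ℕ):ℝ)*((x:ℝ)+1)/(m+1)) - Real.cos (π*((u+v:ℕ):ℝ)*((x:ℝ)+1)/(m+1)))/2 := by
    intro x
    rw [prod_to_sum]
    congr 2
    · rw [Nat.cast_sub hlt.le]; ring_nf
    · push_cast; ring_nf
  simp only [h1]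
  rw [← Finset.sum_div, Finset.sum_sub_distrib,
    cos_sum m (u-v) (by omega) (by omega), cos_sum m (u+v) (by omega) (by omega)]
  have hpar : (Even (u-v)) ↔ (Even (u+v)) := by
    rw [Nat.even_sub hlt.le, Nat.even_add]
  by_cases hc : Even (u-v)
  · rw [if_pos hc, if_pos (hpar.mp hc)]; norm_num
  · rw [if_neg hc, if_neg (fun h => hc (hpar.mpr h))]; norm_num

lemma sin_orth (m u v : ℕ) (hu1 : 1 ≤ u) (hu2 : u ≤ m) (hv1 : 1 ≤ v) (hv2 : v ≤ m) :
    ∑ x ∈ range m, Real.sin (π*u*(x+1)/(m+1)) * Real.sin (π*v*(x+1)/(m+1)) =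
      if u = v then ((m:ℝ)+1)/2 else 0 := by
  rcases lt_trichotomy u v with h | h | h
  · rw [if_neg h.ne]
    rw [show (∑ x ∈ range m, Real.sin (π*u*(x+1)/(m+1)) * Real.sin (π*v*(x+1)/(m+1)))
        = ∑ x ∈ range m, Real.sin (π*v*(x+1)/(m+1)) * Real.sin (π*u*(x+1)/(m+1)) from
      Finset.sum_congr rfl fun x _ => mul_comm _ _]
    exact sin_orth_aux m v u hv2 hu2 h
  · subst h
    rw [if_pos rfl]
    have h1 : ∀ x : ℕ, Real.sin (π*u*((x:ℝ)+1)/(m+1)) * Real.sin (π*u*((x:ℝ)+1)/(m+1))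
        = 1/2 - Real.cos (π*((2*u:ℕ):ℝ)*((x:ℝ)+1)/(m+1))/2 := by
      intro x
      rw [← pow_two, Real.sin_sq_eq_half_sub]
      congr 2
      push_cast; ring
    simp only [h1]
    rw [Finset.sum_sub_distrib, Finset.sum_const, ← Finset.sum_div,
      cos_sum m (2*u) (by omega) (by omega), if_pos (even_two_mul u)]
    simp only [Finset.card_range, nsmul_eq_mul]
    ring
  · rw [if_neg h.ne']
    exact sin_orth_aux m u v hu2 hv2 h


def pathR (m : ℕ) : Matrix (Fin m) (Fin m) ℝ :=
  Matrix.of fun x x' => if x.val+1 = x'.val ∨ x'.val+1 = x.val then 1 else 0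

noncomputable def sineR (m : ℕ) : Matrix (Fin m) (Fin m) ℝ :=
  Matrix.of fun x j => Real.sin (π*((j.val:ℝ)+1)*((x.val:ℝ)+1)/((m:ℝ)+1))

noncomputable def diagR (m : ℕ) : Matrix (Fin m) (Fin m) ℝ :=
  Matrix.diagonal fun j => 2*Real.cos (π*((j.val:ℝ)+1)/((m:ℝ)+1))

lemma path_sum (m x : ℕ) (hx : x < m) (c : ℕ → ℝ) (h0 : c 0 = 0) (hm : c (m+1) = 0) :
    ∑ t ∈ range m, (if x + 1 = t ∨ t + 1 = x then (1:ℝ) else 0) * c (t+1)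
      = c x + c (x+2) := by
  have split : ∀ t ∈ range m, (if x + 1 = t ∨ t + 1 = x then (1:ℝ) else 0) * c (t+1)
      = (if t + 1 = x then (1:ℝ) else 0) * c (t+1) + (if x + 1 = t then (1:ℝ) else 0) * c (t+1) := by
    intro t _
    by_cases h1 : t + 1 = x <;> by_cases h2 : x + 1 = t <;>
      simp [h1, h2] <;> omega
  rw [Finset.sum_congr rfl split, Finset.sum_add_distrib]
  have e1 : ∑ t ∈ range m, (if t+1 = x then (1:ℝ) else 0) * c (t+1) = c x := by
    rcases x with _ | s
    · simp [h0]
    · rw [Finset.sum_eq_single s]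
      · simp
      · intro t _ hne
        have : ¬(t+1 = s+1) := by omega
        simp [this, hne]
      · intro hs
        exact absurd (Finset.mem_range.mpr (by omega)) hs
  have e2 : ∑ t ∈ range m, (if x+1 = t then (1:ℝ) else 0) * c (t+1) = c (x+2) := by
    by_cases hx1 : x+1 < m
    · rw [Finset.sum_eq_single (x+1)]
      · simp
      · intro t _ hne
        have : ¬(x+1 = t) := fun h => hne h.symm
        simp [this]
      · intro hs
        exact absurd (Finset.mem_range.mpr hx1) hs
    · have hxm : x + 2 = m + 1 := by omega
      rw [Finset.sum_eq_zero, hxm, hm]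
      intro t ht
      have : ¬(x+1 = t) := by
        have := Finset.mem_range.mp ht; omega
      simp [this]
  rw [e1, e2]

lemma pathR_mul_sineR (m : ℕ) : pathR m * sineR m = sineR m * diagR m := by
  have hm1 : ((m:ℝ)+1) ≠ 0 := by positivity
  ext x j
  rw [Matrix.mul_apply, diagR, Matrix.mul_diagonal]
  set c : ℕ → ℝ := fun t => Real.sin (π*((j.val:ℝ)+1)*(t:ℝ)/((m:ℝ)+1)) with hc
  have hcs : ∀ t : ℕ, c (t+1) = Real.sin (π*((j.val:ℝ)+1)*((t:ℝ)+1)/((m:ℝ)+1)) := by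
    intro t; simp only [hc]; push_cast; ring_nf
  have hsum : ∑ x' : Fin m, pathR m x x' * sineR m x' j
      = ∑ t ∈ range m, (if x.val + 1 = t ∨ t + 1 = x.val then (1:ℝ) else 0) * c (t+1) := by
    rw [← Fin.sum_univ_eq_sum_range
      (fun t => (if x.val + 1 = t ∨ t + 1 = x.val then (1:ℝ) else 0) * c (t+1)) m]
    apply Finset.sum_congr rfl
    intro x' _
    rw [hcs]
    simp only [pathR, sineR, Matrix.of_apply]
  have h0 : c 0 = 0 := by simp [hc]
  have hmm : c (m+1) = 0 := by
    have : π*((j.val:ℝ)+1)*((m+1:ℕ):ℝ)/((m:ℝ)+1) = ((j.val+1:ℕ):ℝ)*π := by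
      push_cast; field_simp
    simp only [hc, this, Real.sin_nat_mul_pi]
  rw [hsum, path_sum m x.val x.isLt c h0 hmm]
  simp only [hc, sineR, Matrix.of_apply]
  have a1 : π*((j.val:ℝ)+1)*((x.val:ℕ):ℝ)/((m:ℝ)+1)
      = π*((j.val:ℝ)+1)*((x.val:ℝ)+1)/((m:ℝ)+1) - π*((j.val:ℝ)+1)/((m:ℝ)+1) := by
    field_simp; ring
  have a2 : π*((j.val:ℝ)+1)*(((x.val+2:ℕ)):ℝ)/((m:ℝ)+1)
      = π*((j.val:ℝ)+1)*((x.val:ℝ)+1)/((m:ℝ)+1) + π*((j.val:ℝ)+1)/((m:ℝ)+1) := by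
    push_cast; field_simp; ring
  rw [a1, a2, Real.sin_sub, Real.sin_add]
  ring

lemma sineR_orth (m : ℕ) : (sineR m)ᵀ * sineR m = (((m:ℝ)+1)/2) • 1 := by
  ext j j'
  rw [Matrix.mul_apply]
  have : ∑ x : Fin m, (sineR m)ᵀ j x * sineR m x j'
      = ∑ t ∈ range m, Real.sin (π*((j.val+1:ℕ):ℝ)*((t:ℝ)+1)/((m:ℝ)+1))
          * Real.sin (π*((j'.val+1:ℕ):ℝ)*((t:ℝ)+1)/((m:ℝ)+1)) := by
    rw [← Fin.sum_univ_eq_sum_range (fun t => Real.sin (π*((j.val+1:ℕ):ℝ)*((t:ℝ)+1)/((m:ℝ)+1))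
          * Real.sin (π*((j'.val+1:ℕ):ℝ)*((t:ℝ)+1)/((m:ℝ)+1))) m]
    apply Finset.sum_congr rfl
    intro x _
    simp only [sineR, Matrix.transpose_apply, Matrix.of_apply]
    push_cast
    ring_nf
  rw [this, sin_orth m (j.val+1) (j'.val+1) (by omega) (by omega) (by omega) (by omega)]
  rw [Matrix.smul_apply, Matrix.one_apply]
  have : (j.val+1 = j'.val+1) ↔ (j = j') := by
    constructor
    · intro h; exact Fin.ext (by omega)
    · intro h; rw [h]
  by_cases h : j = j'
  · rw [if_pos (this.mpr h), if_pos h]; simp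
  · rw [if_neg (fun hh => h (this.mp hh)), if_neg h]; simp

noncomputable def pathC (m : ℕ) : Matrix (Fin m) (Fin m) ℂ := (pathR m).map Complex.ofRealHom
noncomputable def sineC (m : ℕ) : Matrix (Fin m) (Fin m) ℂ := (sineR m).map Complex.ofRealHom
noncomputable def diagC (m : ℕ) : Matrix (Fin m) (Fin m) ℂ := (diagR m).map Complex.ofRealHom

lemma pathC_mul_sineC (m : ℕ) : pathC m * sineC m = sineC m * diagC m := by
  unfold pathC sineC diagC
  rw [← Matrix.map_mul, ← Matrix.map_mul, pathR_mul_sineR]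

lemma det_sineR_ne (m : ℕ) : (sineR m).det ≠ 0 := by
  have h := congrArg Matrix.det (sineR_orth m)
  rw [Matrix.det_mul, Matrix.det_transpose, Matrix.det_smul, Matrix.det_one] at h
  intro h0
  rw [h0, mul_zero] at h
  have : ((((m:ℝ)+1)/2) ^ Fintype.card (Fin m) * 1) ≠ 0 := by
    apply mul_ne_zero _ one_ne_zero
    apply pow_ne_zero
    positivity
  exact this h.symm

lemma det_sineC_ne (m : ℕ) : (sineC m).det ≠ 0 := by
  unfold sineC
  have : (sineR m).map Complex.ofRealHom = Complex.ofRealHom.mapMatrix (sineR m) := rfl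
  rw [this, ← RingHom.map_det]
  simpa using det_sineR_ne m

lemma kast_decomp (m n : ℕ) :
    kasteleyn m n = pathC m ⊗ₖ (1 : Matrix (Fin n) (Fin n) ℂ)
      + Complex.I • ((1 : Matrix (Fin m) (Fin m) ℂ) ⊗ₖ pathC n) := by
  ext ⟨x, y⟩ ⟨x', y'⟩
  simp only [kasteleyn, pathC, pathR, Matrix.map_apply, Matrix.of_apply, Matrix.add_apply,
    Matrix.smul_apply, Matrix.kroneckerMap_apply, Matrix.one_apply, smul_eq_mul,
    apply_ite Complex.ofRealHom, _root_.map_one, _root_.map_zero]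
  by_cases hxx : x = x' <;> by_cases hyy : y = y' <;>
    by_cases hax : (x.val + 1 = x'.val ∨ x'.val + 1 = x.val) <;>
    by_cases hay : (y.val + 1 = y'.val ∨ y'.val + 1 = y.val) <;>
    simp_all

lemma fin_prod_to_Icc {M : Type*} [CommMonoid M] (m : ℕ) (g : ℕ → M) :
    ∏ j : Fin m, g (j.val + 1) = ∏ j ∈ Finset.Icc 1 m, g j := by
  rw [← Finset.Ico_add_one_right_eq_Icc, Finset.prod_Ico_eq_prod_range, Nat.add_sub_cancel,
    ← Fin.prod_univ_eq_prod_range (fun t => g (1 + t)) m]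
  · apply Finset.prod_congr rfl
    intro j _
    rw [add_comm]


end KastAux

open Real Finset Matrix Kronecker in
/-- det K = ∏_{j=1}^m ∏_{k=1}^n (2cos(πj/(m+1)) + 2i·cos(πk/(n+1))). -/
theorem kasteleyn_det (m n : ℕ) (hm : 0 < m) (hn : 0 < n) :
    (kasteleyn m n).det =
      ∏ j ∈ Finset.Icc 1 m, ∏ k ∈ Finset.Icc 1 n,
        (((2 * Real.cos (Real.pi * j / (m + 1)) : ℝ) : ℂ) +
          2 * Complex.I * ((Real.cos (Real.pi * k / (n + 1)) : ℝ) : ℂ)) := by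
  set S : Matrix (Fin m × Fin n) (Fin m × Fin n) ℂ := sineC m ⊗ₖ sineC n with hS
  set D : Matrix (Fin m × Fin n) (Fin m × Fin n) ℂ :=
    diagC m ⊗ₖ (1 : Matrix (Fin n) (Fin n) ℂ)
      + Complex.I • ((1 : Matrix (Fin m) (Fin m) ℂ) ⊗ₖ diagC n) with hD
  have hKS : kasteleyn m n * S = S * D := by
    rw [hS, hD, kast_decomp, add_mul, Matrix.mul_add]
    congr 1
    · rw [← Matrix.mul_kronecker_mul, ← Matrix.mul_kronecker_mul, one_mul, mul_one,
        pathC_mul_sineC]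
    · rw [smul_mul_assoc, mul_smul_comm]
      congr 1
      rw [← Matrix.mul_kronecker_mul, ← Matrix.mul_kronecker_mul, one_mul, mul_one,
        pathC_mul_sineC]
  have hDdiag : D = Matrix.diagonal (fun p : Fin m × Fin n =>
      ((2*Real.cos (π*((p.1.val:ℝ)+1)/((m:ℝ)+1)) : ℝ) : ℂ)
        + Complex.I * ((2*Real.cos (π*((p.2.val:ℝ)+1)/((n:ℝ)+1)) : ℝ) : ℂ)) := by
    rw [hD]
    unfold diagC diagR
    rw [Matrix.diagonal_map (by simp), Matrix.diagonal_map (by simp),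
      show (1 : Matrix (Fin n) (Fin n) ℂ) = Matrix.diagonal (fun _ => 1) from
        Matrix.diagonal_one.symm,
      show (1 : Matrix (Fin m) (Fin m) ℂ) = Matrix.diagonal (fun _ => 1) from
        Matrix.diagonal_one.symm,
      Matrix.diagonal_kronecker_diagonal, Matrix.diagonal_kronecker_diagonal,
      ← Matrix.diagonal_smul, Matrix.diagonal_add]
    apply congrArg Matrix.diagonal
    funext p
    simp [smul_eq_mul]
  have hdetS : S.det ≠ 0 := by
    rw [hS, Matrix.det_kronecker]
    exact mul_ne_zero (pow_ne_zero _ (det_sineC_ne m)) (pow_ne_zero _ (det_sineC_ne n))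
  have hdets := congrArg Matrix.det hKS
  rw [Matrix.det_mul, Matrix.det_mul, mul_comm S.det D.det] at hdets
  have hdet : (kasteleyn m n).det = D.det := mul_right_cancel₀ hdetS hdets
  rw [hdet, hDdiag, Matrix.det_diagonal, Fintype.prod_prod_type]
  rw [show (∏ j ∈ Finset.Icc 1 m, ∏ k ∈ Finset.Icc 1 n,
        (((2 * Real.cos (Real.pi * j / (m + 1)) : ℝ) : ℂ) +
          2 * Complex.I * ((Real.cos (Real.pi * k / (n + 1)) : ℝ) : ℂ)))
      = ∏ j : Fin m, ∏ k : Fin n,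
        (((2 * Real.cos (Real.pi * (j.val+1) / (m + 1)) : ℝ) : ℂ) +
          2 * Complex.I * ((Real.cos (Real.pi * (k.val+1) / (n + 1)) : ℝ) : ℂ)) from ?_]
  · apply Finset.prod_congr rfl
    intro j _
    apply Finset.prod_congr rfl
    intro k _
    push_cast
    ring
  · rw [← fin_prod_to_Icc m]
    apply Finset.prod_congr rfl
    intro j _
    rw [← fin_prod_to_Icc n]
    apply Finset.prod_congr rfl
    intro k _
    push_cast
    ring
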